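/- Let (X,T) be a topological dynamical system such that the set M_p of T-periodic measures is dense in M(T). Then the set HD = {μ ∈ M(T) : dim_H^+(μ) = 0} is a residual subset of M(T). -/

import Mathlib

open MeasureTheory Filter Topology Metric Set
open scoped ENNReal NNReal

section Defs

variable {X : Type*} [MetricSpace X] [MeasurableSpace X]

/-- The topological support of a Borel measure on a metric space: the set of points all of whose
balls have positive measure. -/
def msupp (μ : Measure X) : Set X := {x : X | ∀ ε > 0, 0 < μ (ball x ε)}

/-- The energy function `I_μ(q, ε) = ∫_{supp μ} μ(B(x,ε))^(q-1) dμ(x)`. -/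
noncomputable def energyI (μ : Measure X) (q ε : ℝ) : ℝ :=
  ∫ x in msupp μ, (μ (ball x ε)).toReal ^ (q - 1) ∂μ

/-- The lower `q`-generalized fractal dimension
`D⁻_μ(q) = liminf_{ε→0⁺} log I_μ(q,ε) / ((q-1) log ε)` (as an extended real number). -/
noncomputable def Dlower (μ : Measure X) (q : ℝ) : EReal :=
  liminf (fun ε : ℝ =>
    ((Real.log (energyI μ q ε) / ((q - 1) * Real.log ε) : ℝ) : EReal)) (𝓝[>] (0 : ℝ))

/-- The upper `q`-generalized fractal dimension
`D⁺_μ(q) = limsup_{ε→0⁺} log I_μ(q,ε) / ((q-1) log ε)` (as an extended real number). -/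
noncomputable def Dupper (μ : Measure X) (q : ℝ) : EReal :=
  limsup (fun ε : ℝ =>
    ((Real.log (energyI μ q ε) / ((q - 1) * Real.log ε) : ℝ) : EReal)) (𝓝[>] (0 : ℝ))

/-- `∫_{supp μ} log μ(B(x,ε)) dμ(x)`, the numerator in the entropy dimension. -/
noncomputable def entNum (μ : Measure X) (ε : ℝ) : ℝ :=
  ∫ x in msupp μ, Real.log (μ (ball x ε)).toReal ∂μ

/-- The lower entropy dimension
`D⁻_μ(1) = liminf_{ε→0⁺} (∫_{supp μ} log μ(B(x,ε)) dμ(x)) / log ε`. -/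
noncomputable def D1lower (μ : Measure X) : EReal :=
  liminf (fun ε : ℝ => ((entNum μ ε / Real.log ε : ℝ) : EReal)) (𝓝[>] (0 : ℝ))

/-- The upper entropy dimension
`D⁺_μ(1) = limsup_{ε→0⁺} (∫_{supp μ} log μ(B(x,ε)) dμ(x)) / log ε`. -/
noncomputable def D1upper (μ : Measure X) : EReal :=
  limsup (fun ε : ℝ => ((entNum μ ε / Real.log ε : ℝ) : EReal)) (𝓝[>] (0 : ℝ))

/-- A measure is `T`-invariant if `μ(T⁻¹ s) = μ s` for every measurable `s`. -/
def IsInvariantMeasure (T : X → X) (μ : Measure X) : Prop :=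
  ∀ s : Set X, MeasurableSet s → μ (T ⁻¹' s) = μ s

/-- `M(T)`: the set of `T`-invariant Borel probability measures on `X`. -/
def invSet (T : X → X) : Set (ProbabilityMeasure X) :=
  {μ : ProbabilityMeasure X | IsInvariantMeasure T μ.toMeasure}

/-- A `T`-periodic measure: `μ = (1/k) ∑_{i<k} δ_{T^i x}` for a `T`-periodic point `x`
of period `k`. -/
def IsPeriodicMeasure (T : X → X) (μ : ProbabilityMeasure X) : Prop :=
  ∃ (x : X) (k : ℕ), 0 < k ∧ T^[k] x = x ∧
    μ.toMeasure = (k : ℝ≥0∞)⁻¹ • ∑ i ∈ Finset.range k, Measure.dirac (T^[i] x)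

/-- The upper Hausdorff dimension of a measure:
`dim_H^+(μ) = inf {dimH E | E Borel, μ(X \ E) = 0}`. -/
noncomputable def dimHplus (μ : Measure X) : ℝ≥0∞ :=
  ⨅ (E : Set X) (_ : MeasurableSet E) (_ : μ Eᶜ = 0), dimH E

/-- The lower Hausdorff dimension of a measure:
`dim_H^-(μ) = inf {dimH E | E Borel, μ(E) > 0}`. -/
noncomputable def dimHminus (μ : Measure X) : ℝ≥0∞ :=
  ⨅ (E : Set X) (_ : MeasurableSet E) (_ : 0 < μ E), dimH E

/-- The return time `τ_s(x) = inf {k ≥ 1 | T^k x ∈ B(x,s)}`. -/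
noncomputable def tauRet (T : X → X) (s : ℝ) (x : X) : ℕ :=
  sInf {k : ℕ | 0 < k ∧ T^[k] x ∈ ball x s}

/-- The lower recurrence rate `R̲(x) = liminf_{s→0⁺} log τ_s(x) / (-log s)`. -/
noncomputable def Rlower (T : X → X) (x : X) : EReal :=
  liminf (fun s : ℝ =>
    ((Real.log (tauRet T s x : ℝ) / (-Real.log s) : ℝ) : EReal)) (𝓝[>] (0 : ℝ))

open Classical in
/-- The lower local dimension `d̲_μ(x) = liminf_{ε→0⁺} log μ(B(x,ε)) / log ε` when all balls
around `x` have positive measure, and `+∞` otherwise. -/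
noncomputable def dLoc (μ : Measure X) (x : X) : EReal :=
  if (∀ ε > 0, 0 < μ (ball x ε)) then
    liminf (fun ε : ℝ =>
      ((Real.log (μ (ball x ε)).toReal / Real.log ε : ℝ) : EReal)) (𝓝[>] (0 : ℝ))
  else ⊤

/-- The auxiliary continuous kernel `f^ε_x(y)`: equal to `1` if `dist x y ≤ ε`, to
`2 - dist x y / ε` if `ε ≤ dist x y ≤ 2ε`, and to `0` if `dist x y ≥ 2ε`. -/
noncomputable def fker (ε : ℝ) (x y : X) : ℝ :=
  if dist x y ≤ ε then 1 else if dist x y ≤ 2 * ε then 2 - dist x y / ε else 0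

/-- `f_ε(μ, x) = ∫ f^ε_x(y) dμ(y)`. -/
noncomputable def feps (ε : ℝ) (μ : Measure X) (x : X) : ℝ := ∫ y, fker ε x y ∂μ

/-- `G` is a finite covering of `X` by open balls of radius `ε` (given by its finite set of
centers). -/
def IsBallCover (ε : ℝ) (G : Finset X) : Prop := (⋃ x ∈ G, ball x ε) = univ

/-- `S_μ(s,ε) = inf_G ∑_{x ∈ G} μ(B(x,ε))^s`, the infimum running over all finite coverings of
`X` by balls of radius `ε`. -/
noncomputable def Sfun (μ : Measure X) (s ε : ℝ) : ℝ :=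
  ⨅ G : {H : Finset X // IsBallCover ε H}, ∑ x ∈ G.val, (μ (ball x ε)).toReal ^ s

/-- `W_μ(s,ε) = inf_G ∑_{x ∈ G} f_ε(μ,x)^s`, the infimum running over all finite coverings of
`X` by balls of radius `ε`. -/
noncomputable def Wfun (μ : Measure X) (s ε : ℝ) : ℝ :=
  ⨅ G : {H : Finset X // IsBallCover ε H}, ∑ x ∈ G.val, (feps ε μ x) ^ s

/-- The regularized energy function `J_μ(q,ε) = ∫ f_ε(μ,x)^(q-1) dμ(x)`. -/
noncomputable def Jfun (μ : Measure X) (q ε : ℝ) : ℝ :=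
  ∫ x, (feps ε μ x) ^ (q - 1) ∂μ

end Defs

section Shift

variable {M : Type*} [MetricSpace M]

/-- The "cylinder ball" `B^n(x,ε) = {y | d(x_i, y_i) < ε for all |i| ≤ n}` in `M^ℤ`. -/
def cylBall (n : ℕ) (x : ℤ → M) (ε : ℝ) : Set (ℤ → M) :=
  {y : ℤ → M | ∀ i : ℤ, |i| ≤ (n : ℤ) → dist (x i) (y i) < ε}

/-- For `ε ∈ (0,1)`, the largest integer `n ≥ 0` with `ε < 1/(n²+1)`. -/
noncomputable def nZero (ε : ℝ) : ℕ := sSup {n : ℕ | ε < 1 / ((n : ℝ) ^ 2 + 1)}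

/-- The modified energy function `I^n_μ(q,ε) = ∫ μ(B^n(x,ε))^(q-1) dμ(x)`. -/
noncomputable def Icyl [MeasurableSpace (ℤ → M)] (μ : Measure (ℤ → M)) (n : ℕ) (q ε : ℝ) :
    ℝ :=
  ∫ x, (μ (cylBall n x ε)).toReal ^ (q - 1) ∂μ

end Shift



section MyAux

variable {X : Type*} [MetricSpace X] [MeasurableSpace X] [BorelSpace X]

lemma myIsOpen_gt (U : Set X) (hU : IsOpen U) (c : ℝ≥0∞) :
    IsOpen {μ : ProbabilityMeasure X | c < μ.toMeasure U} := by
  rw [isOpen_iff_mem_nhds]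
  intro μ hμ
  have h := MeasureTheory.ProbabilityMeasure.le_liminf_measure_open_of_tendsto
    (L := 𝓝 μ) (μs := id) tendsto_id hU
  have := eventually_lt_of_lt_liminf (lt_of_lt_of_le hμ h)
  exact this

def myV (j k : ℕ) : Set (ProbabilityMeasure X) :=
  {μ | ∃ (F : Finset X) (r : X → ℝ),
    (∀ x ∈ F, 0 < r x) ∧
    (∀ x ∈ F, ENNReal.ofReal (2 * r x) ≤ (2⁻¹ : ℝ≥0∞) ^ k) ∧
    (∑ x ∈ F, ENNReal.ofReal (2 * r x) ^ (((j : ℝ) + 1)⁻¹) ≤ (2⁻¹ : ℝ≥0∞) ^ k) ∧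
    1 - (2⁻¹ : ℝ≥0∞) ^ k < μ.toMeasure (⋃ x ∈ F, ball x (r x))}

lemma isOpen_myV (j k : ℕ) : IsOpen (myV (X := X) j k) := by
  have : myV (X := X) j k = ⋃ (F : Finset X) (r : X → ℝ)
      (_ : (∀ x ∈ F, 0 < r x) ∧ (∀ x ∈ F, ENNReal.ofReal (2 * r x) ≤ (2⁻¹ : ℝ≥0∞) ^ k) ∧
        (∑ x ∈ F, ENNReal.ofReal (2 * r x) ^ (((j : ℝ) + 1)⁻¹) ≤ (2⁻¹ : ℝ≥0∞) ^ k)),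
      {μ : ProbabilityMeasure X |
        1 - (2⁻¹ : ℝ≥0∞) ^ k < μ.toMeasure (⋃ x ∈ F, ball x (r x))} := by
    ext μ
    simp only [myV, mem_setOf_eq, mem_iUnion]
    tauto
  rw [this]
  exact isOpen_iUnion fun F => isOpen_iUnion fun r => isOpen_iUnion fun _ =>
    myIsOpen_gt _ (isOpen_biUnion fun x _ => isOpen_ball) _

lemma periodic_mem_myV {T : X → X} {μ : ProbabilityMeasure X}
    (hμ : IsPeriodicMeasure T μ) (j k : ℕ) : μ ∈ myV j k := by
  classical
  obtain ⟨x, n, hn, -, hrep⟩ := hμ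
  set F : Finset X := (Finset.range n).image (fun i => T^[i] x) with hF
  set c : ℝ≥0∞ := (2⁻¹ : ℝ≥0∞) ^ k with hc
  have hc0 : c ≠ 0 := by
    simp [hc]
  have hctop : c ≠ ∞ := by
    simp [hc]
  set ε : ℝ≥0∞ := c / ((F.card : ℝ≥0∞) + 1) with hε
  have hcard_ne : ((F.card : ℝ≥0∞) + 1) ≠ 0 := by simp
  have hcard_top : ((F.card : ℝ≥0∞) + 1) ≠ ∞ := by simp
  have hε0 : ε ≠ 0 := by
    simp only [hε, ne_eq, ENNReal.div_eq_zero_iff, hc0, hcard_top, or_self, not_false_iff]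
  have hεtop : ε ≠ ∞ := by
    exact (ENNReal.div_lt_top hctop hcard_ne).ne
  set e : ℝ≥0∞ := ε ^ (j + 1) with he
  have he0 : e ≠ 0 := pow_ne_zero _ hε0
  have hetop : e ≠ ∞ := ENNReal.pow_ne_top hεtop
  have hetoReal : 0 < e.toReal := ENNReal.toReal_pos he0 hetop
  set ρ : ℝ := min ((2 : ℝ)⁻¹ ^ k / 2) (e.toReal / 2) with hρ
  have hρ0 : 0 < ρ := lt_min (by positivity) (by positivity)
  refine ⟨F, fun _ => ρ, fun _ _ => hρ0, ?_, ?_, ?_⟩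
  · intro y _
    have h2ρ : 2 * ρ ≤ (2 : ℝ)⁻¹ ^ k := by
      have := min_le_left ((2 : ℝ)⁻¹ ^ k / 2) (e.toReal / 2)
      nlinarith [this]
    calc ENNReal.ofReal (2 * ρ) ≤ ENNReal.ofReal ((2 : ℝ)⁻¹ ^ k) := ENNReal.ofReal_le_ofReal h2ρ
      _ = c := by
        rw [hc, ENNReal.ofReal_pow (by norm_num : (0:ℝ) ≤ 2⁻¹)]
        congr 1
        rw [ENNReal.ofReal_inv_of_pos (by norm_num)]
        norm_num
  · -- sum bound
    have hofe : ENNReal.ofReal (2 * ρ) ≤ e := by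
      have h2ρ : 2 * ρ ≤ e.toReal := by
        have := min_le_right ((2 : ℝ)⁻¹ ^ k / 2) (e.toReal / 2)
        nlinarith [this]
      calc ENNReal.ofReal (2 * ρ) ≤ ENNReal.ofReal e.toReal := ENNReal.ofReal_le_ofReal h2ρ
        _ = e := ENNReal.ofReal_toReal hetop
    have hpow : ENNReal.ofReal (2 * ρ) ^ (((j : ℝ) + 1)⁻¹) ≤ ε := by
      have h1 : ENNReal.ofReal (2 * ρ) ^ (((j : ℝ) + 1)⁻¹) ≤ e ^ (((j : ℝ) + 1)⁻¹) :=
        ENNReal.rpow_le_rpow hofe (by positivity)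
      have h2 : e ^ (((j : ℝ) + 1)⁻¹) = ε := by
        rw [he, ← ENNReal.rpow_natCast ε (j + 1), ← ENNReal.rpow_mul]
        have : ((j + 1 : ℕ) : ℝ) * ((j : ℝ) + 1)⁻¹ = 1 := by
          push_cast
          field_simp
        rw [this, ENNReal.rpow_one]
      exact h2 ▸ h1
    calc ∑ y ∈ F, ENNReal.ofReal (2 * ρ) ^ (((j : ℝ) + 1)⁻¹)
        ≤ ∑ _y ∈ F, ε := Finset.sum_le_sum fun _ _ => hpow
      _ = (F.card : ℝ≥0∞) * ε := by rw [Finset.sum_const, nsmul_eq_mul]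
      _ ≤ ((F.card : ℝ≥0∞) + 1) * ε := by
          exact mul_le_mul_left (le_self_add) _
      _ = c := by rw [hε, ENNReal.mul_div_cancel hcard_ne hcard_top]
  · -- measure
    have hFmem : ∀ i ∈ Finset.range n, T^[i] x ∈ F := fun i hi =>
      hF ▸ Finset.mem_image_of_mem _ hi
    have hμF : μ.toMeasure (↑F : Set X) = 1 := by
      rw [hrep, Measure.smul_apply, Measure.finset_sum_apply]
      rw [Finset.sum_congr rfl fun i hi =>
        Measure.dirac_apply_of_mem (by exact_mod_cast hFmem i hi)]
      rw [Finset.sum_const, Finset.card_range, nsmul_eq_mul, mul_one, smul_eq_mul,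
        ENNReal.inv_mul_cancel (by exact_mod_cast hn.ne') (by simp)]
    have hsub : (↑F : Set X) ⊆ ⋃ y ∈ F, ball y ρ := fun z hz =>
      mem_biUnion hz (mem_ball_self hρ0)
    have h1le : 1 ≤ μ.toMeasure (⋃ y ∈ F, ball y ρ) := hμF ▸ measure_mono hsub
    exact lt_of_lt_of_le (ENNReal.sub_lt_self ENNReal.one_ne_top one_ne_zero hc0) h1le

lemma dimHplus_zero_of_mem (μ : ProbabilityMeasure X) (h : ∀ j k : ℕ, μ ∈ myV j k) :
    dimHplus μ.toMeasure = 0 := by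
  -- extract data
  choose F r hr0 hrdiam hrsum hrmeas using h
  set U : ℕ → ℕ → Set X := fun j k => ⋃ x ∈ F j k, ball x (r j k x) with hU
  have hUopen : ∀ j k, IsOpen (U j k) := fun j k => isOpen_biUnion fun x _ => isOpen_ball
  set A : ℕ → ℕ → Set X := fun j m => ⋂ i : ℕ, U j (m + i) with hA
  set E : Set X := ⋂ j : ℕ, ⋃ m : ℕ, A j m with hE
  have hEmeas : MeasurableSet E :=
    MeasurableSet.iInter fun j => MeasurableSet.iUnion fun m =>
      MeasurableSet.iInter fun i => (hUopen j (m + i)).measurableSet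
  -- measure of complement of U
  have hUc : ∀ j k, μ.toMeasure (U j k)ᶜ ≤ (2⁻¹ : ℝ≥0∞) ^ k := by
    intro j k
    have h1 : μ.toMeasure (U j k)ᶜ = 1 - μ.toMeasure (U j k) :=
      prob_compl_eq_one_sub (hUopen j k).measurableSet
    rw [h1]
    have h2 : (1 : ℝ≥0∞) ≤ μ.toMeasure (U j k) + (2⁻¹ : ℝ≥0∞) ^ k :=
      tsub_le_iff_right.1 (le_of_lt (hrmeas j k))
    exact tsub_le_iff_right.2 (by rwa [add_comm] at h2)
  -- complement of E is null
  have hEc : μ.toMeasure Eᶜ = 0 := by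
    have hAj : ∀ j : ℕ, μ.toMeasure (⋃ m : ℕ, A j m)ᶜ = 0 := by
      intro j
      have hbound : ∀ m : ℕ, μ.toMeasure (⋃ m : ℕ, A j m)ᶜ ≤ (2⁻¹ : ℝ≥0∞) ^ m * 2 := by
        intro m
        have hsub : (⋃ m : ℕ, A j m)ᶜ ⊆ ⋃ i : ℕ, (U j (m + i))ᶜ := by
          intro y hy
          have : y ∉ A j m := fun hmem => hy (mem_iUnion.2 ⟨m, hmem⟩)
          simp only [hA, mem_iInter, not_forall] at this
          obtain ⟨i, hi⟩ := this
          exact mem_iUnion.2 ⟨i, hi⟩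
        calc μ.toMeasure (⋃ m : ℕ, A j m)ᶜ ≤ μ.toMeasure (⋃ i : ℕ, (U j (m + i))ᶜ) :=
              measure_mono hsub
          _ ≤ ∑' i : ℕ, μ.toMeasure (U j (m + i))ᶜ := measure_iUnion_le _
          _ ≤ ∑' i : ℕ, (2⁻¹ : ℝ≥0∞) ^ (m + i) := ENNReal.tsum_le_tsum fun i => hUc j (m + i)
          _ = (2⁻¹ : ℝ≥0∞) ^ m * 2 := by
              simp_rw [pow_add]
              rw [ENNReal.tsum_mul_left, ENNReal.tsum_geometric]
              congr 1
              rw [ENNReal.one_sub_inv_two, inv_inv]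
      have htend : Tendsto (fun m : ℕ => (2⁻¹ : ℝ≥0∞) ^ m * 2) atTop (𝓝 0) := by
        have h2 : Tendsto (fun m : ℕ => (2⁻¹ : ℝ≥0∞) ^ m) atTop (𝓝 0) :=
          ENNReal.tendsto_pow_atTop_nhds_zero_of_lt_one (by
            rw [ENNReal.inv_lt_one]; exact ENNReal.one_lt_two)
        simpa using ENNReal.Tendsto.mul_const h2 (Or.inr (by norm_num))
      exact le_antisymm (ge_of_tendsto' htend hbound) zero_le
    rw [hE, compl_iInter]
    exact measure_iUnion_null fun j => hAj j
  -- dimension bound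
  have hdim : ∀ j m : ℕ, dimH (A j m) ≤ (((j : ℝ≥0) + 1)⁻¹ : ℝ≥0) := by
    intro j m
    refine dimH_le_of_hausdorffMeasure_ne_top ?_
    have hcast : ((((j : ℝ≥0) + 1)⁻¹ : ℝ≥0) : ℝ) = ((j : ℝ) + 1)⁻¹ := by push_cast; ring
    rw [hcast]
    have hH : μH[((j : ℝ) + 1)⁻¹] (A j m) = 0 := by
      have hle := Measure.hausdorffMeasure_le_liminf_sum (((j : ℝ) + 1)⁻¹) (A j m)
        (l := atTop) (fun k : ℕ => (2⁻¹ : ℝ≥0∞) ^ (m + k))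
        (by
          have h2 : Tendsto (fun k : ℕ => (2⁻¹ : ℝ≥0∞) ^ (m + k)) atTop (𝓝 0) := by
            simp_rw [pow_add]
            simpa using ENNReal.Tendsto.const_mul
              (ENNReal.tendsto_pow_atTop_nhds_zero_of_lt_one (by
                rw [ENNReal.inv_lt_one]; exact ENNReal.one_lt_two))
              (Or.inr (by simp))
          exact h2)
        (fun k (i : F j (m + k)) => ball (i : X) (r j (m + k) i))
        (Eventually.of_forall fun k i => ?_) (Eventually.of_forall fun k => ?_)
      · refine le_antisymm (le_trans hle ?_) zero_le
        have hbd : ∀ k : ℕ, (∑ i : F j (m + k),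
            EMetric.diam (ball (i : X) (r j (m + k) i)) ^ (((j : ℝ) + 1)⁻¹))
            ≤ (2⁻¹ : ℝ≥0∞) ^ (m + k) := by
          intro k
          calc (∑ i : F j (m + k),
              EMetric.diam (ball (i : X) (r j (m + k) i)) ^ (((j : ℝ) + 1)⁻¹))
              ≤ ∑ i : F j (m + k),
                ENNReal.ofReal (2 * r j (m + k) i) ^ (((j : ℝ) + 1)⁻¹) := by
                refine Finset.sum_le_sum fun i _ => ENNReal.rpow_le_rpow ?_ (by positivity)
                calc EMetric.diam (ball (i : X) (r j (m + k) i))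
                    = EMetric.diam (Metric.eball (i : X) (ENNReal.ofReal (r j (m + k) i))) := by
                      rw [Metric.emetric_ball]
                  _ ≤ 2 * ENNReal.ofReal (r j (m + k) i) := EMetric.diam_ball
                  _ = ENNReal.ofReal (2 * r j (m + k) i) := by
                      rw [ENNReal.ofReal_mul (by norm_num), ENNReal.ofReal_ofNat]
            _ = ∑ x ∈ F j (m + k),
                ENNReal.ofReal (2 * r j (m + k) x) ^ (((j : ℝ) + 1)⁻¹) :=
                Finset.sum_coe_sort (F j (m + k))
                  (fun x => ENNReal.ofReal (2 * r j (m + k) x) ^ (((j : ℝ) + 1)⁻¹))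
            _ ≤ (2⁻¹ : ℝ≥0∞) ^ (m + k) := hrsum j (m + k)
        have h0 : Tendsto (fun k : ℕ => (2⁻¹ : ℝ≥0∞) ^ (m + k)) atTop (𝓝 0) := by
          simp_rw [pow_add]
          simpa using ENNReal.Tendsto.const_mul
            (ENNReal.tendsto_pow_atTop_nhds_zero_of_lt_one (by
              rw [ENNReal.inv_lt_one]; exact ENNReal.one_lt_two))
            (Or.inr (by simp))
        calc liminf (fun k : ℕ => ∑ i : F j (m + k),
              EMetric.diam (ball (i : X) (r j (m + k) i)) ^ (((j : ℝ) + 1)⁻¹)) atTop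
            ≤ liminf (fun k : ℕ => (2⁻¹ : ℝ≥0∞) ^ (m + k)) atTop :=
              liminf_le_liminf (Eventually.of_forall hbd)
          _ = 0 := h0.liminf_eq
      · -- diam bound
        calc EMetric.diam (ball (i : X) (r j (m + k) i))
            = EMetric.diam (Metric.eball (i : X) (ENNReal.ofReal (r j (m + k) i))) := by
              rw [Metric.emetric_ball]
          _ ≤ 2 * ENNReal.ofReal (r j (m + k) i) := EMetric.diam_ball
          _ = ENNReal.ofReal (2 * r j (m + k) i) := by
              rw [ENNReal.ofReal_mul (by norm_num), ENNReal.ofReal_ofNat]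
          _ ≤ (2⁻¹ : ℝ≥0∞) ^ (m + k) := hrdiam j (m + k) _ i.2
      · -- cover
        intro y hy
        have hyU : y ∈ U j (m + k) := by
          have := mem_iInter.1 hy k
          exact this
        simp only [hU, mem_iUnion] at hyU
        obtain ⟨x, hxF, hx⟩ := hyU
        exact mem_iUnion.2 ⟨⟨x, hxF⟩, hx⟩
    rw [hH]
    exact ENNReal.zero_ne_top
  have hdimE : dimH E = 0 := by
    have hEj : ∀ j : ℕ, dimH E ≤ (((j : ℝ≥0) + 1)⁻¹ : ℝ≥0) := by
      intro j
      calc dimH E ≤ dimH (⋃ m : ℕ, A j m) := dimH_mono (iInter_subset _ j)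
        _ = ⨆ m : ℕ, dimH (A j m) := dimH_iUnion _
        _ ≤ (((j : ℝ≥0) + 1)⁻¹ : ℝ≥0) := iSup_le fun m => hdim j m
    refine le_antisymm ?_ zero_le
    have htend : Tendsto (fun j : ℕ => ((((j : ℝ≥0) + 1)⁻¹ : ℝ≥0) : ℝ≥0∞)) atTop (𝓝 0) := by
      have : ∀ j : ℕ, ((((j : ℝ≥0) + 1)⁻¹ : ℝ≥0) : ℝ≥0∞) = (((j + 1 : ℕ) : ℝ≥0∞))⁻¹ := by
        intro j
        rw [ENNReal.coe_inv (by positivity)]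
        push_cast
        ring_nf
      simp_rw [this]
      exact ENNReal.tendsto_inv_nat_nhds_zero.comp (tendsto_add_atTop_nat 1)
    exact ge_of_tendsto' htend hEj
  -- conclude
  refine le_antisymm ?_ zero_le
  calc dimHplus μ.toMeasure ≤ dimH E := by
        refine iInf_le_of_le E (iInf_le_of_le hEmeas (iInf_le_of_le hEc le_rfl))
    _ = 0 := hdimE

end MyAux

/-- For a topological dynamical system `(X,T)` with the `T`-periodic measures
dense in `M(T)`, the set `{μ ∈ M(T) | dim_H⁺(μ) = 0}` is residual in `M(T)`. -/
theorem statement1 {X : Type*} [MetricSpace X] [CompactSpace X]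
    [MeasurableSpace X] [BorelSpace X]
    (T : X → X) (hT : Continuous T)
    (hdense : Dense {μ : ↥(invSet T) | IsPeriodicMeasure T μ.val}) :
    {μ : ↥(invSet T) | dimHplus μ.val.toMeasure = 0} ∈ residual ↥(invSet T) := by
  set W : ℕ → ℕ → Set ↥(invSet T) := fun j k => Subtype.val ⁻¹' myV j k with hW
  have hWopen : ∀ j k, IsOpen (W j k) := fun j k =>
    (isOpen_myV j k).preimage continuous_subtype_val
  have hWdense : ∀ j k, Dense (W j k) := fun j k =>
    hdense.mono fun μ hμ => periodic_mem_myV hμ j k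
  refine Filter.mem_of_superset
    ((countable_iInter_mem).2 fun j : ℕ => (countable_iInter_mem).2 fun k : ℕ =>
      residual_of_dense_open (hWopen j k) (hWdense j k)) ?_
  intro μ hμ
  simp only [mem_iInter] at hμ
  exact dimHplus_zero_of_mem μ.val fun j k => hμ j k
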